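/- With ψ and F as in the n-dimensional trial-function setting, ⟨½(n - ζ∑_i y_i)ψ, F⟩ = (n/4)[b₀ - a₀ρλ + a₀²((n+1)ρ²/2 - 1)]. -/

import Mathlib

open MeasureTheory

section Stmt14Aux
open Real Set Nat

lemma aux_intOn {c : ℝ} (hc : 0 < c) (m : ℕ) :
    IntegrableOn (fun x : ℝ => x ^ m * Real.exp (-(c * x))) (Set.Ici 0) := by
  rw [integrableOn_Ici_iff_integrableOn_Ioi]
  have h := integrableOn_rpow_mul_exp_neg_mul_rpow (s := (m:ℝ)) (p := 1)
    (lt_of_lt_of_le (by norm_num) (Nat.cast_nonneg m)) one_pos hc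
  have : (fun x : ℝ => x ^ m * Real.exp (-(c * x)))
      = fun x : ℝ => x ^ (m:ℝ) * Real.exp (-c * x ^ (1:ℝ)) := by
    funext x
    rw [Real.rpow_natCast, Real.rpow_one, neg_mul]
  rw [this]
  exact h

lemma aux_mom {c : ℝ} (hc : 0 < c) (m : ℕ) :
    ∫ x in Set.Ici (0:ℝ), x ^ m * Real.exp (-(c * x)) = (m ! : ℝ) / c ^ (m + 1) := by
  rw [MeasureTheory.integral_Ici_eq_integral_Ioi]
  have h0 : ∫ x in Set.Ioi (0:ℝ), x ^ m * Real.exp (-x) = (m ! : ℝ) := by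
    have h := Real.Gamma_eq_integral (s := (m:ℝ) + 1) (by positivity)
    rw [Real.Gamma_nat_eq_factorial] at h
    rw [h]
    rw [show ((m:ℝ) + 1 - 1) = (m:ℝ) by ring]
    apply setIntegral_congr_fun measurableSet_Ioi
    intro x hx
    simp only []
    rw [Real.rpow_natCast]
    ring
  have h1 : ∀ x : ℝ, x ^ m * Real.exp (-(c * x))
      = (c⁻¹) ^ m * ((c * x) ^ m * Real.exp (-(c * x))) := by
    intro x
    rw [mul_pow]
    field_simp
    rw [one_div, mul_assoc, ← mul_pow, inv_mul_cancel₀ hc.ne', one_pow, mul_one]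
  simp_rw [h1]
  rw [MeasureTheory.integral_const_mul]
  have h2 := MeasureTheory.integral_comp_mul_left_Ioi
    (fun x : ℝ => x ^ m * Real.exp (-x)) 0 hc
  simp only [mul_zero] at h2
  rw [h2, h0]
  rw [smul_eq_mul]
  rw [pow_add]
  field_simp
  rw [← mul_pow, one_div, inv_mul_cancel₀ hc.ne', one_pow]

noncomputable def f1 (c : ℝ) (m : ℕ) : ℝ → ℝ :=
  (Set.Ici 0).indicator fun x => x ^ m * Real.exp (-(c * x))

lemma f1_integrable {c : ℝ} (hc : 0 < c) (m : ℕ) : Integrable (f1 c m) := by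
  rw [f1, integrable_indicator_iff measurableSet_Ici]
  exact aux_intOn hc m

lemma f1_integral {c : ℝ} (hc : 0 < c) (m : ℕ) :
    ∫ x, f1 c m x = (m ! : ℝ) / c ^ (m + 1) := by
  rw [f1, integral_indicator measurableSet_Ici, aux_mom hc m]

noncomputable def ee {n : ℕ} (β ζ : ℝ) (a : ℕ) (m : Fin n → ℕ) :
    ℝ × (Fin n → ℝ) → ℝ := fun p => f1 β a p.1 * ∏ i, f1 ζ (m i) (p.2 i)

lemma ee_integrable {n : ℕ} {β ζ : ℝ} (hβ : 0 < β) (hζ : 0 < ζ) (a : ℕ)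
    (m : Fin n → ℕ) : Integrable (ee β ζ a m) := by
  have : ee β ζ a m = fun p : ℝ × (Fin n → ℝ) => f1 β a p.1 * ∏ i, f1 ζ (m i) (p.2 i) := rfl
  rw [this, Measure.volume_eq_prod]
  exact (f1_integrable hβ a).mul_prod (Integrable.fintype_prod fun i => f1_integrable hζ (m i))

lemma ee_integral {n : ℕ} {β ζ : ℝ} (hβ : 0 < β) (hζ : 0 < ζ) (a : ℕ)
    (m : Fin n → ℕ) :
    ∫ p, ee β ζ a m p = ((a ! : ℝ) / β ^ (a + 1)) * ∏ i, ((m i)! : ℝ) / ζ ^ (m i + 1) := by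
  simp only [ee]
  rw [Measure.volume_eq_prod,
    integral_prod_mul (f1 β a) (fun y : Fin n → ℝ => ∏ i, f1 ζ (m i) (y i)),
    f1_integral hβ a, MeasureTheory.volume_pi, integral_fintype_prod_eq_prod (ι := Fin n) (fun i => f1 ζ (m i))]
  congr 1
  exact Finset.prod_congr rfl fun i _ => f1_integral hζ (m i)

lemma ee_apply {n : ℕ} {β ζ : ℝ} (a : ℕ) (m : Fin n → ℕ) {p : ℝ × (Fin n → ℝ)}
    (hx : 0 ≤ p.1) (hy : ∀ i, 0 ≤ p.2 i) :
    ee β ζ a m p = p.1 ^ a * (∏ i, p.2 i ^ m i) *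
      (Real.exp (-(β * p.1)) * Real.exp (-(ζ * ∑ i, p.2 i))) := by
  simp only [ee, f1]
  rw [Set.indicator_of_mem (Set.mem_Ici.2 hx)]
  have h1 : ∀ i : Fin n, (Set.Ici (0:ℝ)).indicator
      (fun x => x ^ (m i) * Real.exp (-(ζ * x))) (p.2 i) = p.2 i ^ m i * Real.exp (-(ζ * p.2 i)) :=
    fun i => Set.indicator_of_mem (Set.mem_Ici.2 (hy i)) _
  rw [Finset.prod_congr rfl fun i _ => h1 i, Finset.prod_mul_distrib, ← Real.exp_sum]
  rw [show ∑ i, -(ζ * p.2 i) = -(ζ * ∑ i, p.2 i) by rw [Finset.mul_sum, ← Finset.sum_neg_distrib]]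
  ring

lemma ee_zero {n : ℕ} {β ζ : ℝ} (a : ℕ) (m : Fin n → ℕ) {p : ℝ × (Fin n → ℝ)}
    (h : ¬(0 ≤ p.1 ∧ ∀ i, 0 ≤ p.2 i)) : ee β ζ a m p = 0 := by
  simp only [ee, f1]
  push_neg at h
  by_cases hx : 0 ≤ p.1
  · obtain ⟨i, hi⟩ := h hx
    have : (Set.Ici (0:ℝ)).indicator (fun x => x ^ (m i) * Real.exp (-(ζ * x))) (p.2 i) = 0 :=
      Set.indicator_of_notMem (by simpa using hi) _
    rw [Finset.prod_eq_zero (Finset.mem_univ i) this, mul_zero]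
  · rw [Set.indicator_of_notMem (by simpa using not_le.1 hx), zero_mul]

lemma Vval {n : ℕ} {ζ : ℝ} (m : Fin n → ℕ) :
    (∏ i, ((m i)! : ℝ) / ζ ^ (m i + 1))
      = ((∏ i, (m i)! : ℕ) : ℝ) / ζ ^ (n + ∑ i, m i) := by
  rw [Finset.prod_div_distrib]
  push_cast
  congr 1
  rw [Finset.prod_pow_eq_pow_sum, Finset.sum_add_distrib]
  congr 1
  · simp [add_comm]

lemma prod_pow_ind1 {n : ℕ} (y : Fin n → ℝ) (i : Fin n) :
    ∏ t, y t ^ (if t = i then 1 else 0) = y i := by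
  have h : ∀ t, y t ^ (if t = i then 1 else 0) = if t = i then y t else 1 := by
    intro t; by_cases h : t = i <;> simp [h]
  rw [Finset.prod_congr rfl (fun t _ => h t)]
  simp

lemma prod_pow_ind2 {n : ℕ} (y : Fin n → ℝ) (i : Fin n) :
    ∏ t, y t ^ (2 * (if t = i then 1 else 0)) = y i ^ 2 := by
  have h : ∀ t, y t ^ (2 * (if t = i then 1 else 0)) = if t = i then y t ^ 2 else 1 := by
    intro t; by_cases h : t = i <;> simp [h]
  rw [Finset.prod_congr rfl (fun t _ => h t)]
  simp

lemma prod_fact_two0 {n : ℕ} (i : Fin n) :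
    (∏ t, (2 * (if t = i then 1 else 0))!) = 2 := by
  have h : ∀ t : Fin n, (2 * (if t = i then 1 else 0))! = if t = i then 2 else 1 := by
    intro t; by_cases h : t = i <;> simp [h]
  rw [Finset.prod_congr rfl (fun t _ => h t)]
  simp

lemma prod_fact_two1 {n : ℕ} (i j : Fin n) :
    (∏ t, (2 * (if t = i then 1 else 0) + (if t = j then 1 else 0))!)
      = if i = j then 6 else 2 := by
  by_cases hij : i = j
  · subst hij
    have h : ∀ t : Fin n, (2 * (if t = i then 1 else 0) + (if t = i then 1 else 0))!
        = if t = i then 6 else 1 := by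
      intro t; by_cases h : t = i <;> simp [h, Nat.factorial]
    rw [Finset.prod_congr rfl (fun t _ => h t)]
    simp
  · have hji : ¬ j = i := fun e => hij e.symm
    have h : ∀ t : Fin n, (2 * (if t = i then 1 else 0) + (if t = j then 1 else 0))!
        = if t = i then 2 else 1 := by
      intro t
      by_cases h : t = i
      · subst h; simp [hij]
      · by_cases h' : t = j
        · subst h'; simp [hji]
        · simp [h, h']
    rw [Finset.prod_congr rfl (fun t _ => h t)]
    simp [hij]

lemma prod_fact_one1 {n : ℕ} (i j : Fin n) :
    (∏ t, ((if t = i then 1 else 0) + (if t = j then 1 else 0))!)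
      = if i = j then 2 else 1 := by
  by_cases hij : i = j
  · subst hij
    have h : ∀ t : Fin n, ((if t = i then 1 else 0) + (if t = i then 1 else 0))!
        = if t = i then 2 else 1 := by
      intro t; by_cases h : t = i <;> simp [h]
    rw [Finset.prod_congr rfl (fun t _ => h t)]
    simp
  · have hji : ¬ j = i := fun e => hij e.symm
    have h : ∀ t : Fin n, ((if t = i then 1 else 0) + (if t = j then 1 else 0))! = 1 := by
      intro t
      by_cases h : t = i
      · subst h; simp [hij]
      · by_cases h' : t = j
        · subst h'; simp [hji]
        · simp [h, h']
    rw [Finset.prod_congr rfl (fun t _ => h t)]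
    simp [hij]

lemma prod_fact_trip {n : ℕ} (i j k : Fin n) :
    (∏ t, ((if t = i then 1 else 0) + (if t = j then 1 else 0) + (if t = k then 1 else 0))!)
      = (if i = j then 2 else 1) *
        (1 + (if i = k then 1 else 0) + (if j = k then 1 else 0)) := by
  by_cases hij : i = j
  · subst hij
    by_cases hik : i = k
    · subst hik
      have h : ∀ t : Fin n, ((if t = i then 1 else 0) + (if t = i then 1 else 0) + (if t = i then 1 else 0))!
          = if t = i then 6 else 1 := by
        intro t; by_cases h : t = i <;> simp [h, Nat.factorial]
      rw [Finset.prod_congr rfl (fun t _ => h t)]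
      simp
      try norm_num
    · have hki : ¬ k = i := fun e => hik e.symm
      have h : ∀ t : Fin n, ((if t = i then 1 else 0) + (if t = i then 1 else 0) + (if t = k then 1 else 0))!
          = if t = i then 2 else 1 := by
        intro t
        by_cases h : t = i
        · subst h; simp [hik]
        · by_cases h' : t = k
          · subst h'; simp [hki]
          · simp [h, h']
      rw [Finset.prod_congr rfl (fun t _ => h t)]
      simp [hik]
  · have hji : ¬ j = i := fun e => hij e.symm
    by_cases hik : i = k
    · subst hik
      have h : ∀ t : Fin n, ((if t = i then 1 else 0) + (if t = j then 1 else 0) + (if t = i then 1 else 0))!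
          = if t = i then 2 else 1 := by
        intro t
        by_cases h : t = i
        · subst h; simp [hij]
        · by_cases h' : t = j
          · subst h'; simp [hji]
          · simp [h, h']
      rw [Finset.prod_congr rfl (fun t _ => h t)]
      simp [hij, hji]
      try norm_num
    · have hki : ¬ k = i := fun e => hik e.symm
      by_cases hjk : j = k
      · subst hjk
        have h : ∀ t : Fin n, ((if t = i then 1 else 0) + (if t = j then 1 else 0) + (if t = j then 1 else 0))!
            = if t = j then 2 else 1 := by
          intro t
          by_cases h : t = j
          · subst h; simp [hji]
          · by_cases h' : t = i
            · subst h'; simp [hij]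
            · simp [h, h']
        rw [Finset.prod_congr rfl (fun t _ => h t)]
        simp [hij, hik]
        try norm_num
      · have hkj : ¬ k = j := fun e => hjk e.symm
        have h : ∀ t : Fin n, ((if t = i then 1 else 0) + (if t = j then 1 else 0) + (if t = k then 1 else 0))!
            = 1 := by
          intro t
          by_cases h1 : t = i
          · subst h1; simp [hij, hik]
          · by_cases h2 : t = j
            · subst h2; simp [hji, hjk]
            · by_cases h3 : t = k
              · subst h3; simp [hki, hkj]
              · simp [h1, h2, h3]
        rw [Finset.prod_congr rfl (fun t _ => h t)]
        simp [hij, hik, hjk]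

lemma countA {n : ℕ} :
    ∑ q : Fin n × Fin n, (if q.1 = q.2 then (6:ℝ) else 2) = 2*n^2 + 4*n := by
  have h : ∀ i j : Fin n, (if i = j then (6:ℝ) else 2) = 2 + (if i = j then 4 else 0) := by
    intro i j; split <;> norm_num
  rw [Fintype.sum_prod_type]
  simp_rw [h, Finset.sum_add_distrib, Finset.sum_const, Finset.sum_ite_eq,
    Finset.card_univ, Fintype.card_fin, Finset.mem_univ, if_true, nsmul_eq_mul]
  try simp [Finset.card_univ]
  try push_cast
  ring

lemma countB {n : ℕ} :
    ∑ q : Fin n × Fin n, (if q.1 = q.2 then (2:ℝ) else 1) = n^2 + n := by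
  have h : ∀ i j : Fin n, (if i = j then (2:ℝ) else 1) = 1 + (if i = j then 1 else 0) := by
    intro i j; split <;> norm_num
  rw [Fintype.sum_prod_type]
  simp_rw [h, Finset.sum_add_distrib, Finset.sum_const, Finset.sum_ite_eq,
    Finset.card_univ, Fintype.card_fin, Finset.mem_univ, if_true, nsmul_eq_mul]
  try simp [Finset.card_univ]
  try push_cast
  ring

lemma countC {n : ℕ} :
    ∑ q : Fin n × Fin n × Fin n,
      ((if q.1 = q.2.1 then (2:ℝ) else 1) *
        (1 + (if q.1 = q.2.2 then (1:ℝ) else 0) + (if q.2.1 = q.2.2 then (1:ℝ) else 0)))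
      = n^3 + 3*n^2 + 2*n := by
  have h1 : ∀ i j : Fin n,
      ∑ k : Fin n, ((1:ℝ) + (if i = k then 1 else 0) + (if j = k then 1 else 0))
        = (n:ℝ) + 2 := by
    intro i j
    rw [Finset.sum_add_distrib, Finset.sum_add_distrib]
    simp [Finset.sum_ite_eq, Finset.card_univ]
    ring
  have h3 : ∀ i j : Fin n,
      (∑ k : Fin n, (if i = j then (2:ℝ) else 1) *
        ((1:ℝ) + (if i = k then 1 else 0) + (if j = k then 1 else 0)))
      = (if i = j then (2:ℝ) else 1) * ((n:ℝ)+2) := by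
    intro i j
    rw [← Finset.mul_sum, h1 i j]
  rw [Fintype.sum_prod_type]
  simp_rw [Fintype.sum_prod_type, h3]
  have h2 : ∀ i j : Fin n, (if i = j then (2:ℝ) else 1) * ((n:ℝ) + 2)
      = ((n:ℝ)+2) + (if i = j then (n:ℝ)+2 else 0) := by
    intro i j; split <;> ring
  simp_rw [h2, Finset.sum_add_distrib, Finset.sum_const, Finset.sum_ite_eq,
    Finset.card_univ, Fintype.card_fin, Finset.mem_univ, if_true, nsmul_eq_mul]
  try simp [Finset.card_univ]
  try push_cast
  ring

lemma Ival0 {n : ℕ} {β ζ : ℝ} (hβ : 0 < β) (hζ : 0 < ζ) :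
    ∫ p, ee β ζ 0 (fun _ : Fin n => 0) p = 1/(β * ζ^n) := by
  rw [ee_integral hβ hζ, Vval]
  norm_num
  try ring

lemma Ival0x {n : ℕ} {β ζ : ℝ} (hβ : 0 < β) (hζ : 0 < ζ) :
    ∫ p, ee β ζ 1 (fun _ : Fin n => 0) p = 1/(β^2 * ζ^n) := by
  rw [ee_integral hβ hζ, Vval]
  norm_num
  try ring

lemma Ival1 {n : ℕ} {β ζ : ℝ} (hβ : 0 < β) (hζ : 0 < ζ) (i : Fin n) :
    ∫ p, ee β ζ 0 (fun t => if t = i then 1 else 0) p = 1/(β * ζ^(n+1)) := by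
  rw [ee_integral hβ hζ, Vval]
  have hs : ∑ t : Fin n, (if t = i then 1 else 0) = 1 := by simp
  have hp : ∏ t : Fin n, (if t = i then 1 else 0)! = 1 := by
    apply Finset.prod_eq_one; intro t _; split <;> rfl
  rw [hs, hp]
  norm_num
  try ring

lemma Ival1x {n : ℕ} {β ζ : ℝ} (hβ : 0 < β) (hζ : 0 < ζ) (i : Fin n) :
    ∫ p, ee β ζ 1 (fun t => if t = i then 1 else 0) p = 1/(β^2 * ζ^(n+1)) := by
  rw [ee_integral hβ hζ, Vval]
  have hs : ∑ t : Fin n, (if t = i then 1 else 0) = 1 := by simp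
  have hp : ∏ t : Fin n, (if t = i then 1 else 0)! = 1 := by
    apply Finset.prod_eq_one; intro t _; split <;> rfl
  rw [hs, hp]
  norm_num
  try ring

lemma Ival2 {n : ℕ} {β ζ : ℝ} (hβ : 0 < β) (hζ : 0 < ζ) (i : Fin n) :
    ∫ p, ee β ζ 0 (fun t => 2 * (if t = i then 1 else 0)) p = 2/(β * ζ^(n+2)) := by
  rw [ee_integral hβ hζ, Vval, prod_fact_two0]
  have hs : ∑ t : Fin n, 2 * (if t = i then 1 else 0) = 2 := by simp
  rw [hs]
  norm_num
  try ring

lemma Ival21 {n : ℕ} {β ζ : ℝ} (hβ : 0 < β) (hζ : 0 < ζ) (i j : Fin n) :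
    ∫ p, ee β ζ 0 (fun t => 2 * (if t = i then 1 else 0) + (if t = j then 1 else 0)) p
      = (if i = j then (6:ℝ) else 2)/(β * ζ^(n+3)) := by
  rw [ee_integral hβ hζ, Vval, prod_fact_two1]
  have hs : ∑ t : Fin n, (2 * (if t = i then 1 else 0) + (if t = j then 1 else 0)) = 3 := by
    rw [Finset.sum_add_distrib]; simp
  rw [hs]
  split <;> norm_num <;> try ring

lemma Ival11 {n : ℕ} {β ζ : ℝ} (hβ : 0 < β) (hζ : 0 < ζ) (i j : Fin n) :
    ∫ p, ee β ζ 0 (fun t => (if t = i then 1 else 0) + (if t = j then 1 else 0)) p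
      = (if i = j then (2:ℝ) else 1)/(β * ζ^(n+2)) := by
  rw [ee_integral hβ hζ, Vval, prod_fact_one1]
  have hs : ∑ t : Fin n, ((if t = i then 1 else 0) + (if t = j then 1 else 0)) = 2 := by
    rw [Finset.sum_add_distrib]; simp
  rw [hs]
  split <;> norm_num <;> try ring

lemma Ival111 {n : ℕ} {β ζ : ℝ} (hβ : 0 < β) (hζ : 0 < ζ) (i j k : Fin n) :
    ∫ p, ee β ζ 0
      (fun t => (if t = i then 1 else 0) + (if t = j then 1 else 0) + (if t = k then 1 else 0)) p
      = ((if i = j then (2:ℝ) else 1) *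
          (1 + (if i = k then (1:ℝ) else 0) + (if j = k then (1:ℝ) else 0)))/(β * ζ^(n+3)) := by
  rw [ee_integral hβ hζ, Vval, prod_fact_trip]
  have hs : ∑ t : Fin n,
      ((if t = i then 1 else 0) + (if t = j then 1 else 0) + (if t = k then 1 else 0)) = 3 := by
    rw [Finset.sum_add_distrib, Finset.sum_add_distrib]; simp
  rw [hs]
  push_cast
  split_ifs <;> norm_num <;> try ring

lemma sum1_collapse {n : ℕ} (f : Fin n → ℝ) (E : ℝ) :
    ∑ i, f i * E = (∑ i, f i) * E := (Finset.sum_mul _ _ _).symm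

lemma sum2_collapse {n : ℕ} (f g : Fin n → ℝ) (E : ℝ) :
    ∑ q : Fin n × Fin n, (f q.1 * g q.2 * E) = (∑ i, f i) * (∑ i, g i) * E := by
  rw [Fintype.sum_prod_type, Finset.sum_mul_sum, Finset.sum_mul]
  apply Finset.sum_congr rfl; intro i _
  rw [Finset.sum_mul]

lemma sum3_collapse {n : ℕ} (f g h : Fin n → ℝ) (E : ℝ) :
    ∑ q : Fin n × Fin n × Fin n, (f q.1 * g q.2.1 * h q.2.2 * E)
      = (∑ i, f i) * (∑ i, g i) * (∑ i, h i) * E := by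
  rw [Fintype.sum_prod_type]
  have hper : ∀ i, (∑ q2 : Fin n × Fin n, (f i * g q2.1 * h q2.2 * E))
      = (∑ j, g j) * (∑ j, h j) * (f i * E) := by
    intro i
    rw [← sum2_collapse g h (f i * E)]
    apply Finset.sum_congr rfl; intro q _; ring
  rw [Finset.sum_congr rfl (fun i _ => hper i), ← Finset.mul_sum, ← Finset.sum_mul]
  ring

/-- ⟨½(n - ζ∑y_i)ψ, F⟩ = (n/4)[b₀ - a₀ρλ + a₀²((n+1)ρ²/2 - 1)]. -/
theorem stmt14 (n : ℕ) (hn : 1 ≤ n) (β ζ a₀ b₀ r l ρ : ℝ) (hβ : 0 < β) (hζ : 0 < ζ) :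
    let ψ : ℝ × (Fin n → ℝ) → ℝ := fun p =>
      Real.sqrt (β * ζ ^ n) * Real.exp (-(β * p.1 + ζ * ∑ i, p.2 i) / 2)
    let F : ℝ × (Fin n → ℝ) → ℝ := fun p =>
      ((1 / 8) * a₀ ^ 2 * ζ ^ 2 *
          (∑ i, ∑ j, ((if i = j then (1 : ℝ) else 0) - ρ ^ 2) * p.2 i * p.2 j) +
        (1 / 2) * (l * ρ * a₀ - b₀) * ζ * (∑ i, p.2 i) -
        (1 / 2) * r * β * p.1 - l ^ 2 / 2) * ψ p
    let S : Set (ℝ × (Fin n → ℝ)) := {p | 0 ≤ p.1 ∧ ∀ i, 0 ≤ p.2 i}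
    (∫ p in S, (1 / 2) * ((n : ℝ) - ζ * ∑ i, p.2 i) * ψ p * F p) =
      (n / 4) * (b₀ - a₀ * ρ * l + a₀ ^ 2 * ((n + 1) * ρ ^ 2 / 2 - 1)) := by
  intro ψ F S
  have hSm : MeasurableSet S := by
    have hset : S = (Set.Ici (0:ℝ)) ×ˢ (Set.univ.pi fun _ : Fin n => Set.Ici (0:ℝ)) := by
      ext p
      constructor
      · rintro ⟨h1, h2⟩; exact ⟨h1, fun i _ => h2 i⟩
      · rintro ⟨h1, h2⟩; exact ⟨h1, fun i => h2 i (Set.mem_univ i)⟩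
    rw [hset]
    exact measurableSet_Ici.prod (MeasurableSet.univ_pi fun _ => measurableSet_Ici)
  have key : ∀ p : ℝ × (Fin n → ℝ),
      S.indicator (fun p => (1 / 2) * ((n : ℝ) - ζ * ∑ i, p.2 i) * ψ p * F p) p
        = β * ζ ^ n * (
          (n * a₀^2 * ζ^2 / 16) *
            (∑ i : Fin n, ee β ζ 0 (fun t => 2 * (if t = i then 1 else 0)) p)
          + (-(a₀^2 * ζ^3 / 16)) *
            (∑ q : Fin n × Fin n,
              ee β ζ 0 (fun t => 2 * (if t = q.1 then 1 else 0) + (if t = q.2 then 1 else 0)) p)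
          + (-(n * a₀^2 * ζ^2 * ρ^2 / 16) - (l*ρ*a₀ - b₀) * ζ^2 / 4) *
            (∑ q : Fin n × Fin n,
              ee β ζ 0 (fun t => (if t = q.1 then 1 else 0) + (if t = q.2 then 1 else 0)) p)
          + (a₀^2 * ζ^3 * ρ^2 / 16) *
            (∑ q : Fin n × Fin n × Fin n,
              ee β ζ 0 (fun t => (if t = q.1 then 1 else 0) + (if t = q.2.1 then 1 else 0)
                + (if t = q.2.2 then 1 else 0)) p)
          + (n * (l*ρ*a₀ - b₀) * ζ / 4 + l^2 * ζ / 4) *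
            (∑ i : Fin n, ee β ζ 0 (fun t => if t = i then 1 else 0) p)
          + (-(n * r * β / 4)) * ee β ζ 1 (fun _ => 0) p
          + (r * β * ζ / 4) * (∑ i : Fin n, ee β ζ 1 (fun t => if t = i then 1 else 0) p)
          + (-(n * l^2 / 4)) * ee β ζ 0 (fun _ => 0) p) := by
    intro p
    by_cases hp : p ∈ S
    · rw [Set.indicator_of_mem hp]
      obtain ⟨hx, hy⟩ := hp
      have ht1 : ∀ i : Fin n, ee β ζ 0 (fun t => 2 * (if t = i then 1 else 0)) p
          = p.2 i ^ 2 * (Real.exp (-(β * p.1)) * Real.exp (-(ζ * ∑ i, p.2 i))) := by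
        intro i
        rw [ee_apply _ _ hx hy, prod_pow_ind2, pow_zero, one_mul]
      have hg1 := (Finset.sum_congr rfl (fun i _ => ht1 i)).trans
        (sum1_collapse (fun i => p.2 i ^ 2) _)
      have ht2 : ∀ q : Fin n × Fin n,
          ee β ζ 0 (fun t => 2 * (if t = q.1 then 1 else 0) + (if t = q.2 then 1 else 0)) p
          = p.2 q.1 ^ 2 * p.2 q.2 * (Real.exp (-(β * p.1)) * Real.exp (-(ζ * ∑ i, p.2 i))) := by
        intro q
        rw [ee_apply _ _ hx hy, pow_zero, one_mul]
        simp only [pow_add, Finset.prod_mul_distrib, prod_pow_ind2, prod_pow_ind1]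
      have hg2 := (Finset.sum_congr rfl (fun q _ => ht2 q)).trans
        (sum2_collapse (fun i => p.2 i ^ 2) (fun i => p.2 i) _)
      have ht3 : ∀ q : Fin n × Fin n,
          ee β ζ 0 (fun t => (if t = q.1 then 1 else 0) + (if t = q.2 then 1 else 0)) p
          = p.2 q.1 * p.2 q.2 * (Real.exp (-(β * p.1)) * Real.exp (-(ζ * ∑ i, p.2 i))) := by
        intro q
        rw [ee_apply _ _ hx hy, pow_zero, one_mul]
        simp only [pow_add, Finset.prod_mul_distrib, prod_pow_ind1]
      have hg3 := (Finset.sum_congr rfl (fun q _ => ht3 q)).trans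
        (sum2_collapse (fun i => p.2 i) (fun i => p.2 i) _)
      have ht4 : ∀ q : Fin n × Fin n × Fin n,
          ee β ζ 0 (fun t => (if t = q.1 then 1 else 0) + (if t = q.2.1 then 1 else 0)
            + (if t = q.2.2 then 1 else 0)) p
          = p.2 q.1 * p.2 q.2.1 * p.2 q.2.2 *
              (Real.exp (-(β * p.1)) * Real.exp (-(ζ * ∑ i, p.2 i))) := by
        intro q
        rw [ee_apply _ _ hx hy, pow_zero, one_mul]
        simp only [pow_add, Finset.prod_mul_distrib, prod_pow_ind1]
      have hg4 := (Finset.sum_congr rfl (fun q _ => ht4 q)).trans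
        (sum3_collapse (fun i => p.2 i) (fun i => p.2 i) (fun i => p.2 i) _)
      have ht5 : ∀ i : Fin n, ee β ζ 0 (fun t => if t = i then 1 else 0) p
          = p.2 i * (Real.exp (-(β * p.1)) * Real.exp (-(ζ * ∑ i, p.2 i))) := by
        intro i
        rw [ee_apply _ _ hx hy, prod_pow_ind1, pow_zero, one_mul]
      have hg5 := (Finset.sum_congr rfl (fun i _ => ht5 i)).trans
        (sum1_collapse (fun i => p.2 i) _)
      have hg6 : ee β ζ 1 (fun _ : Fin n => 0) p
          = p.1 * (Real.exp (-(β * p.1)) * Real.exp (-(ζ * ∑ i, p.2 i))) := by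
        rw [ee_apply _ _ hx hy]
        simp
      have ht7 : ∀ i : Fin n, ee β ζ 1 (fun t => if t = i then 1 else 0) p
          = p.2 i * (p.1 * (Real.exp (-(β * p.1)) * Real.exp (-(ζ * ∑ i, p.2 i)))) := by
        intro i
        rw [ee_apply _ _ hx hy, prod_pow_ind1, pow_one]
        ring
      have hg7 := (Finset.sum_congr rfl (fun i _ => ht7 i)).trans
        (sum1_collapse (fun i => p.2 i) _)
      have hg8 : ee β ζ 0 (fun _ : Fin n => 0) p
          = Real.exp (-(β * p.1)) * Real.exp (-(ζ * ∑ i, p.2 i)) := by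
        rw [ee_apply _ _ hx hy]
        simp
      have hFs : (∑ i, ∑ j, ((if i = j then (1 : ℝ) else 0) - ρ ^ 2) * p.2 i * p.2 j)
          = (∑ i, p.2 i ^ 2) - ρ^2 * ((∑ i, p.2 i) * (∑ i, p.2 i)) := by
        have hterm : ∀ i j : Fin n, ((if i = j then (1 : ℝ) else 0) - ρ ^ 2) * p.2 i * p.2 j
            = (if j = i then p.2 j * p.2 j else 0) - ρ^2 * (p.2 i * p.2 j) := by
          intro i j
          by_cases h : i = j
          · subst h; simp; try ring
          · have h' : ¬ j = i := fun e => h e.symm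
            simp [h, h']
            try ring
        simp_rw [hterm, Finset.sum_sub_distrib, Finset.sum_ite_eq', Finset.mem_univ, if_true]
        congr 1
        · exact Finset.sum_congr rfl fun i _ => by ring
        · have h1 : ∀ i : Fin n, (∑ j, ρ^2 * (p.2 i * p.2 j))
              = ρ^2 * (p.2 i * ∑ j, p.2 j) := by
            intro i
            rw [← Finset.mul_sum, ← Finset.mul_sum]
          rw [Finset.sum_congr rfl (fun i _ => h1 i), ← Finset.mul_sum, ← Finset.sum_mul]
      have hK : Real.sqrt (β * ζ ^ n) * Real.sqrt (β * ζ ^ n) = β * ζ ^ n :=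
        Real.mul_self_sqrt (by positivity)
      have hu : Real.exp (-(β * p.1 + ζ * ∑ i, p.2 i) / 2) *
            Real.exp (-(β * p.1 + ζ * ∑ i, p.2 i) / 2)
          = Real.exp (-(β * p.1)) * Real.exp (-(ζ * ∑ i, p.2 i)) := by
        rw [← Real.exp_add, ← Real.exp_add]
        congr 1
        ring
      have hψ : ψ p = Real.sqrt (β * ζ ^ n) *
          Real.exp (-(β * p.1 + ζ * ∑ i, p.2 i) / 2) := rfl
      have hF : F p = (1 / 8 * a₀ ^ 2 * ζ ^ 2 *
          (∑ i, ∑ j, ((if i = j then (1 : ℝ) else 0) - ρ ^ 2) * p.2 i * p.2 j) +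
          1 / 2 * (l * ρ * a₀ - b₀) * ζ * (∑ i, p.2 i) -
          1 / 2 * r * β * p.1 - l ^ 2 / 2) * ψ p := rfl
      rw [hF, hψ, hFs, hg1, hg2, hg3, hg4, hg5, hg6, hg7, hg8]
      linear_combination
        ((1/2 * ((n : ℝ) - ζ * ∑ i, p.2 i) *
          (1 / 8 * a₀ ^ 2 * ζ ^ 2 *
            ((∑ i, p.2 i ^ 2) - ρ^2 * ((∑ i, p.2 i) * (∑ i, p.2 i))) +
            1 / 2 * (l * ρ * a₀ - b₀) * ζ * (∑ i, p.2 i) -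
            1 / 2 * r * β * p.1 - l ^ 2 / 2)) *
          (Real.exp (-(β * p.1 + ζ * ∑ i, p.2 i) / 2) *
            Real.exp (-(β * p.1 + ζ * ∑ i, p.2 i) / 2))) * hK
        + ((1/2 * ((n : ℝ) - ζ * ∑ i, p.2 i) *
          (1 / 8 * a₀ ^ 2 * ζ ^ 2 *
            ((∑ i, p.2 i ^ 2) - ρ^2 * ((∑ i, p.2 i) * (∑ i, p.2 i))) +
            1 / 2 * (l * ρ * a₀ - b₀) * ζ * (∑ i, p.2 i) -
            1 / 2 * r * β * p.1 - l ^ 2 / 2)) * (β * ζ ^ n)) * hu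
    · rw [Set.indicator_of_notMem hp]
      have hz : ∀ (a : ℕ) (m : Fin n → ℕ), ee β ζ a m p = 0 := fun a m => ee_zero a m hp
      simp only [hz, Finset.sum_const_zero, mul_zero, add_zero, zero_add]
  rw [← MeasureTheory.integral_indicator hSm]
  simp_rw [key]
  rw [MeasureTheory.integral_const_mul]
  have hInt1 : Integrable (fun p : ℝ × (Fin n → ℝ) => (n * a₀^2 * ζ^2 / 16) *
      (∑ i : Fin n, ee β ζ 0 (fun t => 2 * (if t = i then 1 else 0)) p)) :=
    (integrable_finset_sum _ (fun i _ => ee_integrable hβ hζ _ _)).const_mul _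
  have hInt2 : Integrable (fun p : ℝ × (Fin n → ℝ) => (-(a₀^2 * ζ^3 / 16)) *
      (∑ q : Fin n × Fin n,
        ee β ζ 0 (fun t => 2 * (if t = q.1 then 1 else 0) + (if t = q.2 then 1 else 0)) p)) :=
    (integrable_finset_sum _ (fun q _ => ee_integrable hβ hζ _ _)).const_mul _
  have hInt3 : Integrable (fun p : ℝ × (Fin n → ℝ) =>
      (-(n * a₀^2 * ζ^2 * ρ^2 / 16) - (l*ρ*a₀ - b₀) * ζ^2 / 4) *
      (∑ q : Fin n × Fin n,
        ee β ζ 0 (fun t => (if t = q.1 then 1 else 0) + (if t = q.2 then 1 else 0)) p)) :=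
    (integrable_finset_sum _ (fun q _ => ee_integrable hβ hζ _ _)).const_mul _
  have hInt4 : Integrable (fun p : ℝ × (Fin n → ℝ) => (a₀^2 * ζ^3 * ρ^2 / 16) *
      (∑ q : Fin n × Fin n × Fin n,
        ee β ζ 0 (fun t => (if t = q.1 then 1 else 0) + (if t = q.2.1 then 1 else 0)
          + (if t = q.2.2 then 1 else 0)) p)) :=
    (integrable_finset_sum _ (fun q _ => ee_integrable hβ hζ _ _)).const_mul _
  have hInt5 : Integrable (fun p : ℝ × (Fin n → ℝ) =>
      (n * (l*ρ*a₀ - b₀) * ζ / 4 + l^2 * ζ / 4) *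
      (∑ i : Fin n, ee β ζ 0 (fun t => if t = i then 1 else 0) p)) :=
    (integrable_finset_sum _ (fun i _ => ee_integrable hβ hζ _ _)).const_mul _
  have hInt6 : Integrable (fun p : ℝ × (Fin n → ℝ) =>
      (-(n * r * β / 4)) * ee β ζ 1 (fun _ => 0) p) :=
    (ee_integrable hβ hζ _ _).const_mul _
  have hInt7 : Integrable (fun p : ℝ × (Fin n → ℝ) => (r * β * ζ / 4) *
      (∑ i : Fin n, ee β ζ 1 (fun t => if t = i then 1 else 0) p)) :=
    (integrable_finset_sum _ (fun i _ => ee_integrable hβ hζ _ _)).const_mul _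
  have hInt8 : Integrable (fun p : ℝ × (Fin n → ℝ) =>
      (-(n * l^2 / 4)) * ee β ζ 0 (fun _ => 0) p) :=
    (ee_integrable hβ hζ _ _).const_mul _
  have hC2 : Integrable (fun p : ℝ × (Fin n → ℝ) =>
          (n * a₀^2 * ζ^2 / 16) *
            (∑ i : Fin n, ee β ζ 0 (fun t => 2 * (if t = i then 1 else 0)) p)
          + (-(a₀^2 * ζ^3 / 16)) *
            (∑ q : Fin n × Fin n,
              ee β ζ 0 (fun t => 2 * (if t = q.1 then 1 else 0) + (if t = q.2 then 1 else 0)) p)) := by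
    exact hInt1.add hInt2
  have hC3 : Integrable (fun p : ℝ × (Fin n → ℝ) =>
          (n * a₀^2 * ζ^2 / 16) *
            (∑ i : Fin n, ee β ζ 0 (fun t => 2 * (if t = i then 1 else 0)) p)
          + (-(a₀^2 * ζ^3 / 16)) *
            (∑ q : Fin n × Fin n,
              ee β ζ 0 (fun t => 2 * (if t = q.1 then 1 else 0) + (if t = q.2 then 1 else 0)) p)
          + (-(n * a₀^2 * ζ^2 * ρ^2 / 16) - (l*ρ*a₀ - b₀) * ζ^2 / 4) *
            (∑ q : Fin n × Fin n,
              ee β ζ 0 (fun t => (if t = q.1 then 1 else 0) + (if t = q.2 then 1 else 0)) p)) := by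
    exact hC2.add hInt3
  have hC4 : Integrable (fun p : ℝ × (Fin n → ℝ) =>
          (n * a₀^2 * ζ^2 / 16) *
            (∑ i : Fin n, ee β ζ 0 (fun t => 2 * (if t = i then 1 else 0)) p)
          + (-(a₀^2 * ζ^3 / 16)) *
            (∑ q : Fin n × Fin n,
              ee β ζ 0 (fun t => 2 * (if t = q.1 then 1 else 0) + (if t = q.2 then 1 else 0)) p)
          + (-(n * a₀^2 * ζ^2 * ρ^2 / 16) - (l*ρ*a₀ - b₀) * ζ^2 / 4) *
            (∑ q : Fin n × Fin n,
              ee β ζ 0 (fun t => (if t = q.1 then 1 else 0) + (if t = q.2 then 1 else 0)) p)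
          + (a₀^2 * ζ^3 * ρ^2 / 16) *
            (∑ q : Fin n × Fin n × Fin n,
              ee β ζ 0 (fun t => (if t = q.1 then 1 else 0) + (if t = q.2.1 then 1 else 0)
                + (if t = q.2.2 then 1 else 0)) p)) := by
    exact hC3.add hInt4
  have hC5 : Integrable (fun p : ℝ × (Fin n → ℝ) =>
          (n * a₀^2 * ζ^2 / 16) *
            (∑ i : Fin n, ee β ζ 0 (fun t => 2 * (if t = i then 1 else 0)) p)
          + (-(a₀^2 * ζ^3 / 16)) *
            (∑ q : Fin n × Fin n,
              ee β ζ 0 (fun t => 2 * (if t = q.1 then 1 else 0) + (if t = q.2 then 1 else 0)) p)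
          + (-(n * a₀^2 * ζ^2 * ρ^2 / 16) - (l*ρ*a₀ - b₀) * ζ^2 / 4) *
            (∑ q : Fin n × Fin n,
              ee β ζ 0 (fun t => (if t = q.1 then 1 else 0) + (if t = q.2 then 1 else 0)) p)
          + (a₀^2 * ζ^3 * ρ^2 / 16) *
            (∑ q : Fin n × Fin n × Fin n,
              ee β ζ 0 (fun t => (if t = q.1 then 1 else 0) + (if t = q.2.1 then 1 else 0)
                + (if t = q.2.2 then 1 else 0)) p)
          + (n * (l*ρ*a₀ - b₀) * ζ / 4 + l^2 * ζ / 4) *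
            (∑ i : Fin n, ee β ζ 0 (fun t => if t = i then 1 else 0) p)) := by
    exact hC4.add hInt5
  have hC6 : Integrable (fun p : ℝ × (Fin n → ℝ) =>
          (n * a₀^2 * ζ^2 / 16) *
            (∑ i : Fin n, ee β ζ 0 (fun t => 2 * (if t = i then 1 else 0)) p)
          + (-(a₀^2 * ζ^3 / 16)) *
            (∑ q : Fin n × Fin n,
              ee β ζ 0 (fun t => 2 * (if t = q.1 then 1 else 0) + (if t = q.2 then 1 else 0)) p)
          + (-(n * a₀^2 * ζ^2 * ρ^2 / 16) - (l*ρ*a₀ - b₀) * ζ^2 / 4) *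
            (∑ q : Fin n × Fin n,
              ee β ζ 0 (fun t => (if t = q.1 then 1 else 0) + (if t = q.2 then 1 else 0)) p)
          + (a₀^2 * ζ^3 * ρ^2 / 16) *
            (∑ q : Fin n × Fin n × Fin n,
              ee β ζ 0 (fun t => (if t = q.1 then 1 else 0) + (if t = q.2.1 then 1 else 0)
                + (if t = q.2.2 then 1 else 0)) p)
          + (n * (l*ρ*a₀ - b₀) * ζ / 4 + l^2 * ζ / 4) *
            (∑ i : Fin n, ee β ζ 0 (fun t => if t = i then 1 else 0) p)
          + (-(n * r * β / 4)) * ee β ζ 1 (fun _ => 0) p) := by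
    exact hC5.add hInt6
  have hC7 : Integrable (fun p : ℝ × (Fin n → ℝ) =>
          (n * a₀^2 * ζ^2 / 16) *
            (∑ i : Fin n, ee β ζ 0 (fun t => 2 * (if t = i then 1 else 0)) p)
          + (-(a₀^2 * ζ^3 / 16)) *
            (∑ q : Fin n × Fin n,
              ee β ζ 0 (fun t => 2 * (if t = q.1 then 1 else 0) + (if t = q.2 then 1 else 0)) p)
          + (-(n * a₀^2 * ζ^2 * ρ^2 / 16) - (l*ρ*a₀ - b₀) * ζ^2 / 4) *
            (∑ q : Fin n × Fin n,
              ee β ζ 0 (fun t => (if t = q.1 then 1 else 0) + (if t = q.2 then 1 else 0)) p)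
          + (a₀^2 * ζ^3 * ρ^2 / 16) *
            (∑ q : Fin n × Fin n × Fin n,
              ee β ζ 0 (fun t => (if t = q.1 then 1 else 0) + (if t = q.2.1 then 1 else 0)
                + (if t = q.2.2 then 1 else 0)) p)
          + (n * (l*ρ*a₀ - b₀) * ζ / 4 + l^2 * ζ / 4) *
            (∑ i : Fin n, ee β ζ 0 (fun t => if t = i then 1 else 0) p)
          + (-(n * r * β / 4)) * ee β ζ 1 (fun _ => 0) p
          + (r * β * ζ / 4) * (∑ i : Fin n, ee β ζ 1 (fun t => if t = i then 1 else 0) p)) := by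
    exact hC6.add hInt7
  rw [integral_add hC7 hInt8, integral_add hC6 hInt7, integral_add hC5 hInt6,
      integral_add hC4 hInt5, integral_add hC3 hInt4, integral_add hC2 hInt3,
      integral_add hInt1 hInt2]
  simp_rw [MeasureTheory.integral_const_mul]
  rw [integral_finset_sum _ (fun i _ => ee_integrable hβ hζ _ _),
      integral_finset_sum _ (fun q _ => ee_integrable hβ hζ _ _),
      integral_finset_sum _ (fun q _ => ee_integrable hβ hζ _ _),
      integral_finset_sum _ (fun q _ => ee_integrable hβ hζ _ _),
      integral_finset_sum _ (fun i _ => ee_integrable hβ hζ _ _),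
      integral_finset_sum _ (fun i _ => ee_integrable hβ hζ _ _)]
  rw [Finset.sum_congr rfl (fun (i : Fin n) _ => Ival2 hβ hζ i),
      Finset.sum_congr rfl (fun (q : Fin n × Fin n) _ => Ival21 hβ hζ q.1 q.2),
      Finset.sum_congr rfl (fun (q : Fin n × Fin n) _ => Ival11 hβ hζ q.1 q.2),
      Finset.sum_congr rfl (fun (q : Fin n × Fin n × Fin n) _ => Ival111 hβ hζ q.1 q.2.1 q.2.2),
      Finset.sum_congr rfl (fun (i : Fin n) _ => Ival1 hβ hζ i),
      Finset.sum_congr rfl (fun (i : Fin n) _ => Ival1x hβ hζ i),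
      Ival0x hβ hζ, Ival0 hβ hζ]
  simp only [← Finset.sum_div]
  rw [countA, countB, countC]
  simp only [Finset.sum_const, Finset.card_univ, Fintype.card_fin, nsmul_eq_mul]
  have hζn : (ζ : ℝ) ^ n ≠ 0 := pow_ne_zero _ hζ.ne'
  simp only [pow_add]
  field_simp
  ring


end Stmt14Aux
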